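/- arXiv:1812.00164 — 2 statements merged into one kernel-verified Lean document; each statement's English description precedes it below -/
import Mathlib

section
/- Let E be a Hilbert K(H)-module and let T, S : E → E be adjointable operators. Then T ∥ S (in the operator norm) if and only if T*T ∥ T*S and ‖T*S‖ = ‖T‖·‖S‖. -/
open scoped InnerProductSpace
open Filter Topology

/-- Two elements `x, y` of a complex normed space are *norm-parallel*, written `x ∥ y`,
if `‖x + λ • y‖ = ‖x‖ + ‖y‖` for some unimodular complex number `λ`. -/
def NormParallel {X : Type*} [SeminormedAddCommGroup X] [Module ℂ X] (x y : X) : Prop :=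
  ∃ lam : ℂ, ‖lam‖ = 1 ∧ ‖x + lam • y‖ = ‖x‖ + ‖y‖

/-- The rank-one operator `ξ ⊗ η : H →L[ℂ] H`, `ν ↦ [ν, η] ξ`, where `[·,·]` is the inner
product of `H` taken linear in the *first* variable (so `[ν, η] = ⟪η, ν⟫` in Mathlib's
convention). -/
noncomputable def rankOne {H : Type*} [NormedAddCommGroup H] [InnerProductSpace ℂ H]
    (ξ η : H) : H →L[ℂ] H :=
  (ContinuousLinearMap.toSpanSingleton ℂ ξ).comp (innerSL ℂ η)

/-- A (left) Hilbert `K(H)`-module: a complex Banach space `E` which is a left module over the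
C⋆-algebra `K(H)` of compact operators on a complex Hilbert space `H` (here compact operators
are represented as elements of `H →L[ℂ] H` satisfying `IsCompactOperator`, and `ksmul` is the
module action), equipped with a `K(H)`-valued inner product `kinner`, linear in the first
variable, satisfying `⟪a • x, y⟫ = a * ⟪x, y⟫`, `⟪x, y⟫* = ⟪y, x⟫`, `⟪x, x⟫ ≥ 0`,
`⟪x, x⟫ = 0 ↔ x = 0`, and whose norm satisfies `‖x‖ = ‖⟪x, x⟫‖ ^ (1/2)` (`E` is complete).
The field `theta x y` is the "compact" operator `θ_{x,y} : z ↦ ⟪z, y⟫ • x` (bundled as a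
continuous linear map; continuity and linearity are automatic). -/
class HilbertKHModule (H : Type*) [NormedAddCommGroup H] [InnerProductSpace ℂ H]
    [CompleteSpace H] (E : Type*) [NormedAddCommGroup E] [NormedSpace ℂ E] [CompleteSpace E]
    where
  /-- the action of (compact) operators on `E` -/
  ksmul : (H →L[ℂ] H) → E → E
  /-- the `K(H)`-valued inner product -/
  kinner : E → E → (H →L[ℂ] H)
  kinner_compact : ∀ x y : E, IsCompactOperator (kinner x y)
  kinner_add_left : ∀ x x' y : E, kinner (x + x') y = kinner x y + kinner x' y
  kinner_smul_left : ∀ (c : ℂ) (x y : E), kinner (c • x) y = c • kinner x y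
  kinner_op_smul_left : ∀ (a : H →L[ℂ] H) (x y : E), IsCompactOperator a →
    kinner (ksmul a x) y = a * kinner x y
  star_kinner : ∀ x y : E, star (kinner x y) = kinner y x
  kinner_self_pos : ∀ x : E, (kinner x x).IsPositive
  kinner_self_eq_zero : ∀ x : E, kinner x x = 0 ↔ x = 0
  norm_sq_eq : ∀ x : E, ‖x‖ ^ 2 = ‖kinner x x‖
  ksmul_add : ∀ (a : H →L[ℂ] H) (x y : E), IsCompactOperator a →
    ksmul a (x + y) = ksmul a x + ksmul a y
  add_ksmul : ∀ (a b : H →L[ℂ] H) (x : E), IsCompactOperator a → IsCompactOperator b →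
    ksmul (a + b) x = ksmul a x + ksmul b x
  mul_ksmul : ∀ (a b : H →L[ℂ] H) (x : E), IsCompactOperator a → IsCompactOperator b →
    ksmul (a * b) x = ksmul a (ksmul b x)
  ksmul_smul_comm : ∀ (c : ℂ) (a : H →L[ℂ] H) (x : E), IsCompactOperator a →
    ksmul (c • a) x = c • ksmul a x
  /-- the "compact" operator `θ_{x,y}` -/
  theta : E → E → (E →L[ℂ] E)
  theta_apply : ∀ x y z : E, theta x y z = ksmul (kinner z y) x

namespace HilbertKHModule

variable {H : Type*} [NormedAddCommGroup H] [InnerProductSpace ℂ H] [CompleteSpace H]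
variable {E : Type*} [NormedAddCommGroup E] [NormedSpace ℂ E] [CompleteSpace E]
variable [HilbertKHModule H E]

/-- `x` is a basic vector of `E` witnessed by the unit vector `ξ`, i.e. `⟪x, x⟫ = ξ ⊗ ξ`. -/
def IsBasicVector (x : E) (ξ : H) : Prop :=
  ‖ξ‖ = 1 ∧ kinner (H := H) x x = rankOne ξ ξ

/-- a bounded operator `T` on `E` is adjointable with adjoint `T'` if
`⟪T x, y⟫ = ⟪x, T' y⟫` for all `x, y`. -/
def IsAdjointPair (T T' : E →L[ℂ] E) : Prop :=
  ∀ x y : E, kinner (H := H) (T x) y = kinner x (T' y)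

/-- a bounded operator on `E` is adjointable if it has an adjoint. (Every adjointable map
`E → E` is automatically bounded and linear.) -/
def IsAdjointable (T : E →L[ℂ] E) : Prop :=
  ∃ T', IsAdjointPair (H := H) T T'

end HilbertKHModule

variable {H : Type*} [NormedAddCommGroup H] [InnerProductSpace ℂ H] [CompleteSpace H]
variable {E : Type*} [NormedAddCommGroup E] [NormedSpace ℂ E] [CompleteSpace E]
variable [HilbertKHModule H E]

open HilbertKHModule


section Aux

lemma kinner_zero_left' (y : E) : kinner (H := H) (0 : E) y = 0 := by
  have h := kinner_add_left (H := H) (0 : E) 0 y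
  rw [add_zero] at h
  exact (left_eq_add.mp h)

lemma kinner_zero_right' (x : E) : kinner (H := H) x (0 : E) = 0 := by
  rw [← star_kinner, kinner_zero_left', star_zero]

lemma kinner_neg_left' (x y : E) : kinner (H := H) (-x) y = -(kinner (H := H) x y) := by
  rw [← neg_one_smul ℂ x, kinner_smul_left, neg_one_smul]

lemma kinner_sub_left' (x x' y : E) :
    kinner (H := H) (x - x') y = kinner (H := H) x y - kinner (H := H) x' y := by
  rw [sub_eq_add_neg, kinner_add_left, kinner_neg_left', sub_eq_add_neg]

lemma kinner_add_right' (x y y' : E) :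
    kinner (H := H) x (y + y') = kinner (H := H) x y + kinner (H := H) x y' := by
  rw [← star_kinner, kinner_add_left, star_add, star_kinner, star_kinner]

lemma kinner_sub_right' (x y y' : E) :
    kinner (H := H) x (y - y') = kinner (H := H) x y - kinner (H := H) x y' := by
  rw [← star_kinner, kinner_sub_left', star_sub, star_kinner, star_kinner]

lemma kinner_smul_right' (c : ℂ) (x y : E) :
    kinner (H := H) x (c • y) = (starRingEnd ℂ c) • kinner (H := H) x y := by
  rw [← star_kinner, kinner_smul_left, star_smul, star_kinner, Complex.star_def]

lemma kinner_op_smul_right' (a : H →L[ℂ] H) (x y : E) (ha : IsCompactOperator a) :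
    kinner (H := H) x (ksmul a y) = kinner (H := H) x y * star a := by
  rw [← star_kinner, kinner_op_smul_left a y x ha, star_mul, star_kinner]

lemma kinner_self_nonneg' (x : E) : (0 : H →L[ℂ] H) ≤ kinner (H := H) x x :=
  (ContinuousLinearMap.nonneg_iff_isPositive _).mpr (kinner_self_pos x)

/-- Cauchy–Schwarz inequality for the `K(H)`-valued inner product. -/
lemma norm_kinner_le' (x y : E) : ‖kinner (H := H) x y‖ ≤ ‖x‖ * ‖y‖ := by
  rcases eq_or_ne y 0 with rfl | hy
  · simp [kinner_zero_right', mul_nonneg (norm_nonneg x) (norm_nonneg (0 : E))]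
  have hy0 : (0 : ℝ) < ‖y‖ := norm_pos_iff.mpr hy
  set b : H →L[ℂ] H := kinner (H := H) x y with hb
  set q : H →L[ℂ] H := kinner (H := H) y y with hq
  set p : H →L[ℂ] H := kinner (H := H) x x with hp
  have hqnorm : ‖q‖ = ‖y‖ ^ 2 := (norm_sq_eq y).symm
  set r : ℝ := ‖y‖ ^ 2 with hr
  have hr0 : (0 : ℝ) < r := by positivity
  have hcb : IsCompactOperator b := kinner_compact x y
  set c : ℂ := (r : ℂ) with hc
  have hcconj : (starRingEnd ℂ) c = c := Complex.conj_ofReal r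
  have hsm : ∀ (s : ℝ) (a : H →L[ℂ] H), (s : ℂ) • a = s • a := fun s a => by
    rw [← Complex.coe_algebraMap, algebraMap_smul]
  set z : E := c • x - ksmul b y with hz
  have hyx : kinner (H := H) y x = star b := by rw [← star_kinner]
  have h11 : kinner (H := H) (c • x) (c • x) = (c * c) • p := by
    rw [kinner_smul_left, kinner_smul_right', hcconj, smul_smul, ← hp]
  have h12 : kinner (H := H) (c • x) (ksmul b y) = c • (b * star b) := by
    rw [kinner_smul_left, kinner_op_smul_right' b x y hcb, ← hb]
  have h21 : kinner (H := H) (ksmul b y) (c • x) = c • (b * star b) := by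
    rw [kinner_op_smul_left b y (c • x) hcb, kinner_smul_right', hcconj, hyx, mul_smul_comm]
  have h22 : kinner (H := H) (ksmul b y) (ksmul b y) = b * q * star b := by
    rw [kinner_op_smul_left b y _ hcb, kinner_op_smul_right' b y y hcb, ← hq, mul_assoc]
  have e1 : kinner (H := H) z z
      = ((c * c) • p - c • (b * star b)) - (c • (b * star b) - b * q * star b) := by
    rw [hz, kinner_sub_left', kinner_sub_right', kinner_sub_right', h11, h12, h21, h22]
  -- pass to real scalars
  have hcc : c * c = ((r * r : ℝ) : ℂ) := by push_cast; ring
  rw [hcc, hsm, hsm] at e1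
  -- b q b* ≤ r • (b b*)
  have hqle : b * q * star b ≤ r • (b * star b) := by
    have h1 : q ≤ algebraMap ℝ _ ‖q‖ :=
      IsSelfAdjoint.le_algebraMap_norm_self (kinner_self_pos y).isSelfAdjoint
    have h2 := star_left_conjugate_le_conjugate h1 (star b)
    rw [star_star] at h2
    refine le_of_le_of_eq h2 ?_
    rw [Algebra.algebraMap_eq_smul_one, mul_smul_comm, mul_one, smul_mul_assoc, hqnorm]
  have hzz : (0 : H →L[ℂ] H) ≤ kinner (H := H) z z := kinner_self_nonneg' z
  rw [e1] at hzz
  have h3 : r • (b * star b) + (r • (b * star b) - b * q * star b) ≤ (r * r) • p := by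
    have := sub_nonneg.mp (by rwa [sub_sub] at hzz)
    exact this
  have h4 : r • (b * star b) ≤ (r * r) • p :=
    le_trans (le_add_of_nonneg_right (sub_nonneg.mpr hqle)) h3
  have hWnn : (0 : H →L[ℂ] H) ≤ r • (b * star b) := by
    have h := mul_star_self_nonneg ((Real.sqrt r : ℂ) • b)
    rwa [star_smul, smul_mul_assoc, mul_smul_comm, smul_smul, Complex.star_def,
      Complex.conj_ofReal, ← Complex.ofReal_mul, Real.mul_self_sqrt hr0.le, hsm] at h
  have h5 : ‖r • (b * star b)‖ ≤ ‖(r * r) • p‖ :=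
    CStarAlgebra.norm_le_norm_of_nonneg_of_le hWnn h4
  rw [norm_smul, norm_smul, Real.norm_eq_abs, Real.norm_eq_abs, abs_of_pos hr0,
    abs_of_pos (mul_pos hr0 hr0), CStarRing.norm_self_mul_star] at h5
  have hpx : ‖p‖ = ‖x‖ ^ 2 := (norm_sq_eq x).symm
  rw [hpx] at h5
  have h6 : ‖b‖ * ‖b‖ ≤ r * ‖x‖ ^ 2 := by
    have := (mul_le_mul_iff_right₀ hr0).mp (by linarith [h5] : r * (‖b‖ * ‖b‖) ≤ r * (r * ‖x‖ ^ 2))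
    exact this
  have h7 : ‖b‖ ^ 2 ≤ (‖x‖ * ‖y‖) ^ 2 := by
    rw [hr] at h6; nlinarith [h6]
  calc ‖b‖ = Real.sqrt (‖b‖ ^ 2) := (Real.sqrt_sq (norm_nonneg b)).symm
    _ ≤ Real.sqrt ((‖x‖ * ‖y‖) ^ 2) := Real.sqrt_le_sqrt h7
    _ = ‖x‖ * ‖y‖ := Real.sqrt_sq (by positivity)

lemma adjointPair_symm {T T' : E →L[ℂ] E} (h : IsAdjointPair (H := H) T T') :
    IsAdjointPair (H := H) T' T := fun x y => by
  calc kinner (H := H) (T' x) y = star (kinner (H := H) y (T' x)) := by rw [star_kinner]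
    _ = star (kinner (H := H) (T y) x) := by rw [h y x]
    _ = kinner (H := H) x (T y) := by rw [star_kinner]

lemma norm_sq_le_norm_adj_mul {T T' : E →L[ℂ] E} (h : IsAdjointPair (H := H) T T') :
    ‖T‖ ^ 2 ≤ ‖T' * T‖ := by
  have key : ∀ x : E, ‖T x‖ ≤ Real.sqrt ‖T' * T‖ * ‖x‖ := by
    intro x
    have h1 : ‖T x‖ ^ 2 = ‖kinner (H := H) (T x) (T x)‖ := norm_sq_eq _
    have h2 : ‖T x‖ ^ 2 ≤ ‖x‖ * ‖T' (T x)‖ := by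
      rw [h1, h x (T x)]; exact norm_kinner_le' x (T' (T x))
    have h3 : ‖T' (T x)‖ ≤ ‖T' * T‖ * ‖x‖ := (T' * T).le_opNorm x
    have h4 : ‖T x‖ ^ 2 ≤ ‖T' * T‖ * ‖x‖ ^ 2 := by
      calc ‖T x‖ ^ 2 ≤ ‖x‖ * (‖T' * T‖ * ‖x‖) :=
            le_trans h2 (mul_le_mul_of_nonneg_left h3 (norm_nonneg x))
        _ = ‖T' * T‖ * ‖x‖ ^ 2 := by ring
    calc ‖T x‖ = Real.sqrt (‖T x‖ ^ 2) := (Real.sqrt_sq (norm_nonneg _)).symm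
      _ ≤ Real.sqrt (‖T' * T‖ * ‖x‖ ^ 2) := Real.sqrt_le_sqrt h4
      _ = Real.sqrt ‖T' * T‖ * ‖x‖ := by
          rw [Real.sqrt_mul (norm_nonneg _), Real.sqrt_sq (norm_nonneg x)]
  have h5 : ‖T‖ ≤ Real.sqrt ‖T' * T‖ :=
    T.opNorm_le_bound (Real.sqrt_nonneg _) key
  calc ‖T‖ ^ 2 ≤ Real.sqrt ‖T' * T‖ ^ 2 :=
        pow_le_pow_left₀ (norm_nonneg T) h5 2
    _ = ‖T' * T‖ := Real.sq_sqrt (norm_nonneg _)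

lemma norm_adjoint_le {T T' : E →L[ℂ] E} (h : IsAdjointPair (H := H) T T') :
    ‖T'‖ ≤ ‖T‖ := by
  refine T'.opNorm_le_bound (norm_nonneg T) fun y => ?_
  have h1 : ‖T' y‖ ^ 2 = ‖kinner (H := H) (T' y) (T' y)‖ := norm_sq_eq _
  have h2 : ‖T' y‖ ^ 2 ≤ ‖y‖ * ‖T (T' y)‖ := by
    rw [h1, adjointPair_symm h y (T' y)]; exact norm_kinner_le' y (T (T' y))
  have h3 : ‖T (T' y)‖ ≤ ‖T‖ * ‖T' y‖ := T.le_opNorm _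
  have h4 : ‖T' y‖ ^ 2 ≤ ‖T‖ * ‖y‖ * ‖T' y‖ := by
    calc ‖T' y‖ ^ 2 ≤ ‖y‖ * (‖T‖ * ‖T' y‖) :=
          le_trans h2 (mul_le_mul_of_nonneg_left h3 (norm_nonneg y))
      _ = ‖T‖ * ‖y‖ * ‖T' y‖ := by ring
  rcases eq_or_lt_of_le (norm_nonneg (T' y)) with h0 | h0
  · rw [← h0]; positivity
  · nlinarith [h4, h0]

lemma norm_adj_mul_self {T T' : E →L[ℂ] E} (h : IsAdjointPair (H := H) T T') :
    ‖T' * T‖ = ‖T‖ ^ 2 := by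
  refine le_antisymm ?_ (norm_sq_le_norm_adj_mul h)
  calc ‖T' * T‖ ≤ ‖T'‖ * ‖T‖ := norm_mul_le T' T
    _ ≤ ‖T‖ * ‖T‖ := mul_le_mul_of_nonneg_right (norm_adjoint_le h) (norm_nonneg T)
    _ = ‖T‖ ^ 2 := (sq ‖T‖).symm

end Aux

/-- For adjointable operators `T, S` on `E` (with adjoints `T*, S*`):
`T ∥ S` iff `T*T ∥ T*S` and `‖T*S‖ = ‖T‖·‖S‖`. -/
theorem statement11 (T S T' S' : E →L[ℂ] E)
    (hT : IsAdjointPair (H := H) T T') (hS : IsAdjointPair (H := H) S S') :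
    NormParallel T S ↔
      (NormParallel (T' * T) (T' * S) ∧ ‖T' * S‖ = ‖T‖ * ‖S‖) := by
  constructor
  · rintro ⟨lam, hlam, hpar⟩
    set c : ℂ := (starRingEnd ℂ) lam with hc
    have hcl : c * lam = 1 := by rw [hc, Complex.conj_mul', hlam]; norm_num
    set R : E →L[ℂ] E := T + lam • S with hR
    set R' : E →L[ℂ] E := T' + c • S' with hR'
    have hadjR : IsAdjointPair (H := H) R R' := by
      intro x y
      have : R x = T x + lam • S x := rfl
      rw [this, kinner_add_left, kinner_smul_left, hT, hS]
      have : R' y = T' y + c • S' y := rfl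
      rw [this, kinner_add_right', kinner_smul_right', hc, Complex.conj_conj]
    have hexp : R' * R = (T' * T + lam • (T' * S)) + (c • (S' * T) + S' * S) := by
      rw [hR, hR', add_mul, mul_add, mul_add, mul_smul_comm, smul_mul_assoc,
        smul_mul_assoc, mul_smul_comm, smul_smul, hcl, one_smul]
    have hA1 : (‖T‖ + ‖S‖) ^ 2 ≤ ‖R' * R‖ := by
      have := norm_sq_le_norm_adj_mul hadjR
      rwa [hpar] at this
    set X : ℝ := ‖T' * T + lam • (T' * S)‖ with hX
    have hA2 : ‖R' * R‖ ≤ X + (‖S‖ * ‖T‖ + ‖S‖ ^ 2) := by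
      calc ‖R' * R‖ ≤ X + ‖c • (S' * T) + S' * S‖ := by rw [hexp]; exact norm_add_le _ _
        _ ≤ X + (‖c • (S' * T)‖ + ‖S' * S‖) := by
            have := norm_add_le (c • (S' * T)) (S' * S)
            linarith
        _ ≤ X + (‖S‖ * ‖T‖ + ‖S‖ ^ 2) := by
            have e1 : ‖c • (S' * T)‖ = ‖S' * T‖ := by
              rw [norm_smul c (S' * T), hc, RCLike.norm_conj, hlam, one_mul]
            have e2 : ‖S' * T‖ ≤ ‖S‖ * ‖T‖ :=
              le_trans (norm_mul_le S' T)
                (mul_le_mul_of_nonneg_right (norm_adjoint_le hS) (norm_nonneg T))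
            have e3 : ‖S' * S‖ ≤ ‖S‖ ^ 2 := le_of_eq (norm_adj_mul_self hS)
            linarith
    have hTT : ‖T' * T‖ = ‖T‖ ^ 2 := norm_adj_mul_self hT
    have hTS : ‖T' * S‖ ≤ ‖T‖ * ‖S‖ :=
      le_trans (norm_mul_le T' S)
        (mul_le_mul_of_nonneg_right (norm_adjoint_le hT) (norm_nonneg S))
    have hA3 : X ≤ ‖T' * T‖ + ‖T' * S‖ := by
      calc X ≤ ‖T' * T‖ + ‖lam • (T' * S)‖ := norm_add_le _ _
        _ = ‖T' * T‖ + ‖T' * S‖ := by rw [norm_smul lam (T' * S), hlam, one_mul]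
    have hXge : ‖T‖ ^ 2 + ‖T‖ * ‖S‖ ≤ X := by nlinarith [hA1, hA2]
    have hun : ‖T' * S‖ = ‖T‖ * ‖S‖ := by
      have : ‖T‖ * ‖S‖ ≤ ‖T' * S‖ := by
        have := le_trans hXge hA3
        rw [hTT] at this; linarith
      linarith
    refine ⟨⟨lam, hlam, ?_⟩, hun⟩
    have : X = ‖T' * T‖ + ‖T' * S‖ := by
      refine le_antisymm hA3 ?_
      rw [hTT, hun]; exact hXge
    exact this
  · rintro ⟨⟨lam, hlam, hpar⟩, hun⟩
    rcases eq_or_lt_of_le (norm_nonneg T) with hT0 | hT0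
    · have hTz : T = 0 := by
        rw [← norm_eq_zero]; exact hT0.symm
      refine ⟨1, by norm_num, ?_⟩
      rw [hTz, one_smul, zero_add, norm_zero, zero_add]
    · have hTT : ‖T' * T‖ = ‖T‖ ^ 2 := norm_adj_mul_self hT
      have hfac : T' * T + lam • (T' * S) = T' * (T + lam • S) := by
        rw [mul_add, mul_smul_comm]
      have h1 : ‖T‖ ^ 2 + ‖T‖ * ‖S‖ ≤ ‖T‖ * ‖T + lam • S‖ := by
        calc ‖T‖ ^ 2 + ‖T‖ * ‖S‖ = ‖T' * T‖ + ‖T' * S‖ := by rw [hTT, hun]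
          _ = ‖T' * T + lam • (T' * S)‖ := hpar.symm
          _ = ‖T' * (T + lam • S)‖ := by rw [hfac]
          _ ≤ ‖T'‖ * ‖T + lam • S‖ := norm_mul_le _ _
          _ ≤ ‖T‖ * ‖T + lam • S‖ :=
              mul_le_mul_of_nonneg_right (norm_adjoint_le hT) (norm_nonneg _)
      have h2 : ‖T‖ + ‖S‖ ≤ ‖T + lam • S‖ := by
        have := (mul_le_mul_iff_right₀ hT0).mp (by nlinarith [h1] : ‖T‖ * (‖T‖ + ‖S‖) ≤ ‖T‖ * ‖T + lam • S‖)
        exact this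
      have h3 : ‖T + lam • S‖ ≤ ‖T‖ + ‖S‖ := by
        calc ‖T + lam • S‖ ≤ ‖T‖ + ‖lam • S‖ := norm_add_le _ _
          _ = ‖T‖ + ‖S‖ := by rw [norm_smul lam S, hlam, one_mul]
      exact ⟨lam, hlam, le_antisymm h3 h2⟩
end

section
/- Let H be a complex Hilbert space and let t, s be compact operators on H such that t s* is a normal operator. Then t ∥ s in the C*-algebra K(H) of compact operators (i.e. ‖t + λs‖ = ‖t‖ + ‖s‖ for some λ ∈ ℂ with |λ| = 1) if and only if ‖t s*‖ = ‖t‖·‖s‖. -/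
open scoped InnerProductSpace
open Filter Topology

set_option maxHeartbeats 1000000

section Aux

variable {H : Type*} [NormedAddCommGroup H] [InnerProductSpace ℂ H] [CompleteSpace H]

lemma aux_eigen_of_attain (C : H →L[ℂ] H) {x : H} (hx : ‖x‖ = 1) (hCx : ‖C x‖ = ‖C‖) :
    (star C) (C x) = ((‖C‖ : ℂ) ^ 2) • x := by
  set a := (star C) (C x) with ha
  have hinner : ⟪a, x⟫_ℂ = (‖C‖ : ℂ) ^ 2 := by
    rw [ha, ContinuousLinearMap.star_eq_adjoint, ContinuousLinearMap.adjoint_inner_left,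
      inner_self_eq_norm_sq_to_K, hCx]
    norm_cast
  have hna : ‖a‖ ≤ ‖C‖ ^ 2 := by
    calc ‖a‖ ≤ ‖star C‖ * ‖C x‖ := (star C).le_opNorm _
    _ = ‖C‖ ^ 2 := by rw [norm_star, hCx]; ring
  have hnb : ‖((‖C‖ : ℂ) ^ 2) • x‖ = ‖C‖ ^ 2 := by
    rw [norm_smul, hx, mul_one, norm_pow, Complex.norm_real, Real.norm_eq_abs, abs_of_nonneg (norm_nonneg _)]
  have hre : RCLike.re ⟪a, ((‖C‖ : ℂ) ^ 2) • x⟫_ℂ = ‖C‖ ^ 2 * ‖C‖ ^ 2 := by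
    rw [inner_smul_right, hinner]
    have h2 : ((‖C‖ : ℂ) ^ 2) * ((‖C‖ : ℂ) ^ 2) = ((‖C‖ ^ 2 * ‖C‖ ^ 2 : ℝ) : ℂ) := by
      push_cast; ring
    rw [h2]; exact Complex.ofReal_re _
  have hkey : ‖a - ((‖C‖ : ℂ) ^ 2) • x‖ ^ 2 ≤ 0 := by
    rw [norm_sub_sq (𝕜 := ℂ), hre, hnb]
    nlinarith [norm_nonneg a]
  have : a - ((‖C‖ : ℂ) ^ 2) • x = 0 := by
    have h0 : ‖a - ((‖C‖ : ℂ) ^ 2) • x‖ = 0 := by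
      nlinarith [norm_nonneg (a - ((‖C‖ : ℂ) ^ 2) • x)]
    exact norm_eq_zero.mp h0
  linear_combination (norm := module) this

lemma aux_attains {C : H →L[ℂ] H} (hC : IsCompactOperator C) (hC0 : C ≠ 0) :
    ∃ x : H, ‖x‖ = 1 ∧ ‖C x‖ = ‖C‖ := by
  have hCpos : 0 < ‖C‖ := norm_pos_iff.mpr hC0
  -- choose an almost-maximizing sequence
  have hseq : ∀ n : ℕ, ∃ x : H, ‖x‖ ≤ 1 ∧ ‖C‖ - (n + 1 : ℝ)⁻¹ < ‖C x‖ := by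
    intro n
    have hlt : ‖C‖ - (n + 1 : ℝ)⁻¹ < ‖C‖ := by
      have : (0:ℝ) < (n + 1 : ℝ)⁻¹ := by positivity
      linarith
    obtain ⟨x, hx1, hx2⟩ := C.exists_lt_apply_of_lt_opNorm hlt
    exact ⟨x, hx1.le, hx2⟩
  choose u hu1 hu2 using hseq
  have hCu_le : ∀ n, ‖C (u n)‖ ≤ ‖C‖ := fun n => by
    calc ‖C (u n)‖ ≤ ‖C‖ * ‖u n‖ := C.le_opNorm _
    _ ≤ ‖C‖ := by nlinarith [hu1 n, hCpos.le]
  have hnorm : Tendsto (fun n => ‖C (u n)‖) atTop (𝓝 ‖C‖) := by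
    have h1 : Tendsto (fun n : ℕ => ‖C‖ - (n + 1 : ℝ)⁻¹) atTop (𝓝 (‖C‖ - 0)) :=
      tendsto_const_nhds.sub (tendsto_one_div_add_atTop_nhds_zero_nat.congr (by
        intro n; rw [one_div]))
    rw [sub_zero] at h1
    exact tendsto_of_tendsto_of_tendsto_of_le_of_le h1 tendsto_const_nhds
      (fun n => (hu2 n).le) hCu_le
  -- the operator B = C* C
  set B : H →L[ℂ] H := star C * C with hBdef
  have hBfun : (fun y => (star C) (C y)) = ⇑B := by
    funext y; simp [hBdef]
  have hBc : IsCompactOperator (⇑B) := by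
    rw [← hBfun]
    exact hC.continuous_comp (star C).continuous
  -- the defect sequence tends to zero
  set β : ℝ := ‖C‖ ^ 2 with hβ
  have hβpos : 0 < β := by positivity
  have hdefect : ∀ n, ‖B (u n) - (β : ℂ) • u n‖ ^ 2 ≤ β * (β - ‖C (u n)‖ ^ 2) := by
    intro n
    have hre : RCLike.re ⟪B (u n), (β : ℂ) • u n⟫_ℂ = β * ‖C (u n)‖ ^ 2 := by
      have h1 : ⟪B (u n), u n⟫_ℂ = ((‖C (u n)‖ ^ 2 : ℝ) : ℂ) := by
        rw [hBdef]
        rw [ContinuousLinearMap.mul_apply, ContinuousLinearMap.star_eq_adjoint,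
          ContinuousLinearMap.adjoint_inner_left, inner_self_eq_norm_sq_to_K]
        norm_cast
      rw [inner_smul_right, h1]
      have h2 : (β : ℂ) * ((‖C (u n)‖ ^ 2 : ℝ) : ℂ) = ((β * ‖C (u n)‖ ^ 2 : ℝ) : ℂ) := by
        push_cast; ring
      rw [h2]; exact Complex.ofReal_re _
    have hBn : ‖B (u n)‖ ≤ ‖C‖ * ‖C (u n)‖ := by
      calc ‖B (u n)‖ = ‖(star C) (C (u n))‖ := by rw [← hBfun]
      _ ≤ ‖star C‖ * ‖C (u n)‖ := (star C).le_opNorm _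
      _ = ‖C‖ * ‖C (u n)‖ := by rw [norm_star]
    have hsn : ‖(β : ℂ) • u n‖ ≤ β := by
      rw [norm_smul, Complex.norm_real, Real.norm_eq_abs, abs_of_nonneg hβpos.le]
      nlinarith [hu1 n, hβpos.le]
    rw [norm_sub_sq (𝕜 := ℂ), hre]
    have h3 : ‖B (u n)‖ ^ 2 ≤ β * ‖C (u n)‖ ^ 2 := by
      rw [hβ]; nlinarith [norm_nonneg (B (u n)), norm_nonneg (C (u n)), hCu_le n]
    nlinarith [hsn, norm_nonneg ((β : ℂ) • u n), hβpos.le]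
  have hdef0 : Tendsto (fun n => ‖B (u n) - (β : ℂ) • u n‖) atTop (𝓝 0) := by
    have hsq : Tendsto (fun n => β * (β - ‖C (u n)‖ ^ 2)) atTop (𝓝 0) := by
      have : Tendsto (fun n => β - ‖C (u n)‖ ^ 2) atTop (𝓝 (β - ‖C‖ ^ 2)) :=
        tendsto_const_nhds.sub ((hnorm.pow 2))
      rw [hβ] at this ⊢
      simpa using (this.const_mul (‖C‖ ^ 2)).congr (fun n => by ring)
    have h2 : Tendsto (fun n => ‖B (u n) - (β : ℂ) • u n‖ ^ 2) atTop (𝓝 0) := by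
      refine tendsto_of_tendsto_of_tendsto_of_le_of_le tendsto_const_nhds hsq
        (fun n => by positivity) hdefect
    have h3 := (Real.continuous_sqrt.tendsto 0).comp h2
    simp only [Real.sqrt_zero] at h3
    refine h3.congr (fun n => ?_)
    simp [Real.sqrt_sq (norm_nonneg _)]
  -- extract a convergent subsequence of B (u n)
  have hK : IsCompact (closure ((B : H →ₗ[ℂ] H) '' Metric.closedBall 0 1)) :=
    IsCompactOperator.isCompact_closure_image_closedBall (𝕜₁ := ℂ)
      (f := (B : H →ₗ[ℂ] H)) hBc 1
  have hmem : ∀ n, B (u n) ∈ closure ((B : H →ₗ[ℂ] H) '' Metric.closedBall 0 1) := fun n =>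
    subset_closure ⟨u n, by simpa [Metric.mem_closedBall, dist_zero_right] using hu1 n, rfl⟩
  obtain ⟨a, -, φ, hφ, hconv⟩ := hK.tendsto_subseq hmem
  -- the subsequence u ∘ φ converges to x := β⁻¹ • a
  have hsmul : Tendsto (fun n => (β : ℂ) • u (φ n)) atTop (𝓝 a) := by
    have h1 : Tendsto (fun n => B (u (φ n)) - (β : ℂ) • u (φ n)) atTop (𝓝 0) := by
      have := hdef0.comp hφ.tendsto_atTop
      rwa [tendsto_zero_iff_norm_tendsto_zero]
    have := hconv.sub h1
    simpa using this
  have hx : Tendsto (fun n => u (φ n)) atTop (𝓝 (((β : ℂ))⁻¹ • a)) := by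
    have := hsmul.const_smul (((β : ℂ))⁻¹)
    refine this.congr (fun n => ?_)
    rw [smul_smul, inv_mul_cancel₀, one_smul]
    exact_mod_cast hβpos.ne'
  set x : H := ((β : ℂ))⁻¹ • a with hxdef
  have hCx : ‖C x‖ = ‖C‖ := by
    have h1 : Tendsto (fun n => ‖C (u (φ n))‖) atTop (𝓝 ‖C x‖) :=
      ((C.continuous.tendsto x).comp hx).norm
    have h2 : Tendsto (fun n => ‖C (u (φ n))‖) atTop (𝓝 ‖C‖) := hnorm.comp hφ.tendsto_atTop
    exact tendsto_nhds_unique h1 h2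
  have hxle : ‖x‖ ≤ 1 := by
    have h1 : Tendsto (fun n => ‖u (φ n)‖) atTop (𝓝 ‖x‖) := hx.norm
    exact le_of_tendsto h1 (Eventually.of_forall (fun n => hu1 (φ n)))
  have hxge : 1 ≤ ‖x‖ := by
    by_contra hlt
    push_neg at hlt
    have : ‖C x‖ ≤ ‖C‖ * ‖x‖ := C.le_opNorm x
    rw [hCx] at this
    nlinarith
  exact ⟨x, le_antisymm hxle hxge, hCx⟩

lemma aux_fwd {t s : H →L[ℂ] H} (ht : IsCompactOperator t) (hs : IsCompactOperator s)
    {lam : ℂ} (hlam : ‖lam‖ = 1) (heq : ‖t + lam • s‖ = ‖t‖ + ‖s‖) :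
    ‖t * star s‖ = ‖t‖ * ‖s‖ := by
  have hle : ‖t * star s‖ ≤ ‖t‖ * ‖s‖ := by
    calc ‖t * star s‖ ≤ ‖t‖ * ‖star s‖ := norm_mul_le _ _
    _ = ‖t‖ * ‖s‖ := by rw [norm_star]
  by_cases ht0 : t = 0
  · simp [ht0]
  by_cases hs0 : s = 0
  · simp [hs0]
  have htpos : 0 < ‖t‖ := norm_pos_iff.mpr ht0
  have hspos : 0 < ‖s‖ := norm_pos_iff.mpr hs0
  set C : H →L[ℂ] H := t + lam • s with hCdef
  have hCc : IsCompactOperator C := by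
    have h1 : IsCompactOperator (⇑t + lam • ⇑s) := ht.add (hs.smul lam)
    have h2 : ⇑C = ⇑t + lam • ⇑s := by
      funext y; simp [hCdef]
    rwa [h2]
  have hC0 : C ≠ 0 := by
    intro h
    rw [h, norm_zero] at heq
    nlinarith
  obtain ⟨x, hx1, hCx⟩ := aux_attains hCc hC0
  rw [heq] at hCx
  have htx_le : ‖t x‖ ≤ ‖t‖ := by simpa [hx1] using t.le_opNorm x
  have hsx_le : ‖s x‖ ≤ ‖s‖ := by simpa [hx1] using s.le_opNorm x
  have hCx' : ‖t x + lam • s x‖ = ‖t‖ + ‖s‖ := by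
    have : C x = t x + lam • s x := by simp [hCdef]
    rwa [this] at hCx
  have hlamsx : ‖lam • s x‖ = ‖s x‖ := by rw [norm_smul, hlam, one_mul]
  have htri : ‖t x + lam • s x‖ ≤ ‖t x‖ + ‖s x‖ := by
    calc ‖t x + lam • s x‖ ≤ ‖t x‖ + ‖lam • s x‖ := norm_add_le _ _
    _ = ‖t x‖ + ‖s x‖ := by rw [hlamsx]
  have htx : ‖t x‖ = ‖t‖ := by linarith
  have hsx : ‖s x‖ = ‖s‖ := by linarith
  -- equality in the triangle inequality gives Cauchy–Schwarz equality
  have hre : RCLike.re ⟪t x, lam • s x⟫_ℂ = ‖t x‖ * ‖lam • s x‖ := by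
    have hsq := norm_add_sq (𝕜 := ℂ) (t x) (lam • s x)
    rw [hCx', ← htx, ← hsx, ← hlamsx] at hsq
    nlinarith [hsq]
  have hinner_eq : ‖⟪t x, lam • s x⟫_ℂ‖ = ‖t x‖ * ‖lam • s x‖ := by
    refine le_antisymm (norm_inner_le_norm _ _) ?_
    rw [← hre]
    exact (RCLike.re_le_norm _)
  have htx0 : t x ≠ 0 := by
    intro h; rw [h, norm_zero] at htx; exact htpos.ne htx
  have hsx0 : lam • s x ≠ 0 := by
    intro h
    rw [h, norm_zero] at hlamsx
    rw [← hlamsx] at hsx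
    exact hspos.ne hsx
  obtain ⟨r, hr0, hrs⟩ := (norm_inner_eq_norm_iff htx0 hsx0).mp hinner_eq
  -- s x = c • t x
  set c : ℂ := lam⁻¹ * r with hcdef
  have hlam0 : lam ≠ 0 := by
    intro h; rw [h, norm_zero] at hlam; norm_num at hlam
  have hc0 : c ≠ 0 := mul_ne_zero (inv_ne_zero hlam0) hr0
  have hsc : s x = c • t x := by
    have : lam⁻¹ • (lam • s x) = lam⁻¹ • (r • t x) := by rw [hrs]
    rwa [smul_smul, smul_smul, inv_mul_cancel₀ hlam0, one_smul, ← hcdef] at this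
  have hcabs : ‖c‖ = ‖s‖ / ‖t‖ := by
    have : ‖s x‖ = ‖c‖ * ‖t x‖ := by rw [hsc, norm_smul]
    rw [htx, hsx] at this
    field_simp [this]
    linarith
  -- (star s) (s x) = ‖s‖² x
  have hstar : (star s) (s x) = ((‖s‖ : ℂ) ^ 2) • x := aux_eigen_of_attain s hx1 hsx
  -- key computation
  have hkey : (t * star s) (t x) = (c⁻¹ * (‖s‖ : ℂ) ^ 2) • t x := by
    have htxc : t x = c⁻¹ • s x := by
      rw [hsc, smul_smul, inv_mul_cancel₀ hc0, one_smul]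
    calc (t * star s) (t x) = t ((star s) (t x)) := by rw [ContinuousLinearMap.mul_apply]
    _ = t ((star s) (c⁻¹ • s x)) := by rw [← htxc]
    _ = t (c⁻¹ • ((star s) (s x))) := by rw [map_smul]
    _ = t ((c⁻¹ * (‖s‖ : ℂ) ^ 2) • x) := by rw [hstar, smul_smul]
    _ = (c⁻¹ * (‖s‖ : ℂ) ^ 2) • t x := by rw [map_smul]
  have hnormkey : ‖(t * star s) (t x)‖ = ‖t‖ ^ 2 * ‖s‖ := by
    rw [hkey, norm_smul, norm_mul, norm_inv, hcabs, htx]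
    have : ‖(‖s‖ : ℂ) ^ 2‖ = ‖s‖ ^ 2 := by
      rw [norm_pow, Complex.norm_real, Real.norm_eq_abs, abs_of_nonneg (norm_nonneg _)]
    rw [this]
    field_simp
  have hge : ‖t‖ * ‖s‖ ≤ ‖t * star s‖ := by
    have h1 : ‖(t * star s) (t x)‖ ≤ ‖t * star s‖ * ‖t x‖ := (t * star s).le_opNorm _
    rw [hnormkey, htx] at h1
    nlinarith
  linarith

lemma aux_bwd {t s : H →L[ℂ] H} (ht : IsCompactOperator t) (hs : IsCompactOperator s)
    (hn : (t * star s) * star (t * star s) = star (t * star s) * (t * star s))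
    (hns : ‖t * star s‖ = ‖t‖ * ‖s‖) : NormParallel t s := by
  by_cases ht0 : t = 0
  · exact ⟨1, by norm_num, by simp [ht0]⟩
  by_cases hs0 : s = 0
  · exact ⟨1, by norm_num, by simp [hs0]⟩
  have htpos : 0 < ‖t‖ := norm_pos_iff.mpr ht0
  have hspos : 0 < ‖s‖ := norm_pos_iff.mpr hs0
  set A : H →L[ℂ] H := t * star s with hAdef
  have hApos : 0 < ‖A‖ := by rw [hns]; positivity
  have hA0 : A ≠ 0 := norm_pos_iff.mp hApos
  have hAc : IsCompactOperator (⇑A) := by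
    have h1 : IsCompactOperator (⇑t ∘ ⇑(star s)) := ht.comp_clm (star s)
    have h2 : ⇑A = ⇑t ∘ ⇑(star s) := by funext y; simp [hAdef]
    rwa [h2]
  obtain ⟨x₀, hx₀1, hAx₀⟩ := aux_attains hAc hA0
  have hx₀eig : (star A) (A x₀) = ((‖A‖ : ℂ) ^ 2) • x₀ := aux_eigen_of_attain A hx₀1 hAx₀
  -- the eigenspace of A* A for the eigenvalue ‖A‖²
  set D : H →L[ℂ] H := star A * A - ((‖A‖ : ℂ) ^ 2) • 1 with hDdef
  set E : Submodule ℂ H := LinearMap.ker (D : H →ₗ[ℂ] H) with hEdef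
  have hDapp : ∀ y, D y = (star A) (A y) - ((‖A‖ : ℂ) ^ 2) • y := by
    intro y
    simp [hDdef, ContinuousLinearMap.sub_apply, ContinuousLinearMap.smul_apply,
      ContinuousLinearMap.one_apply, ContinuousLinearMap.mul_apply]
  have hmemE : ∀ y, y ∈ E ↔ (star A) (A y) = ((‖A‖ : ℂ) ^ 2) • y := by
    intro y
    rw [hEdef, LinearMap.mem_ker, ContinuousLinearMap.coe_coe, hDapp, sub_eq_zero]
  have hx₀E : x₀ ∈ E := (hmemE x₀).mpr hx₀eig
  have hEnorm : ∀ y ∈ E, ‖A y‖ = ‖A‖ * ‖y‖ := by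
    intro y hy
    have h1 := (hmemE y).mp hy
    have h2 : ((‖A y‖ : ℂ)) ^ 2 = ⟪(star A) (A y), y⟫_ℂ := by
      rw [ContinuousLinearMap.star_eq_adjoint, ContinuousLinearMap.adjoint_inner_left,
        inner_self_eq_norm_sq_to_K]
      norm_cast
    have h3 : ⟪(star A) (A y), y⟫_ℂ = ((‖A‖ : ℂ)) ^ 2 * ((‖y‖ : ℂ)) ^ 2 := by
      rw [h1, inner_smul_left, inner_self_eq_norm_sq_to_K]
      congr 1
      rw [map_pow]
      congr 1
      exact Complex.conj_ofReal _
    have h4 : ((‖A y‖ ^ 2 : ℝ) : ℂ) = (((‖A‖ * ‖y‖) ^ 2 : ℝ) : ℂ) := by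
      push_cast
      rw [h2, h3]; ring
    have h5 : ‖A y‖ ^ 2 = (‖A‖ * ‖y‖) ^ 2 := by exact_mod_cast h4
    nlinarith [norm_nonneg (A y), norm_nonneg y, norm_nonneg (A : H →L[ℂ] H), mul_nonneg (norm_nonneg (A : H →L[ℂ] H)) (norm_nonneg y)]
  -- E is invariant under A (here normality is used)
  have hop : star A * A * A = A * (star A * A) := by
    calc star A * A * A = (A * star A) * A := by rw [hn]
    _ = A * (star A * A) := by rw [mul_assoc]
  have hinv : ∀ y ∈ E, A y ∈ E := by
    intro y hy
    rw [hmemE]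
    have h1 := (hmemE y).mp hy
    have h2 : (star A * A * A) y = (A * (star A * A)) y := by rw [hop]
    simp only [ContinuousLinearMap.mul_apply] at h2
    rw [h2, h1, map_smul]
  -- E is a closed, hence complete, subspace
  haveI hEcomplete : CompleteSpace ↥E := (ContinuousLinearMap.isClosed_ker D).completeSpace_coe
  -- E is finite dimensional
  have hK : IsCompact (closure ((A : H →ₗ[ℂ] H) '' Metric.closedBall 0 1)) :=
    IsCompactOperator.isCompact_closure_image_closedBall (𝕜₁ := ℂ)
      (f := (A : H →ₗ[ℂ] H)) hAc 1
  haveI hEfin : FiniteDimensional ℂ ↥E := by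
    apply FiniteDimensional.of_isCompact_closedBall₀ ℂ (one_pos)
    apply IsSeqCompact.isCompact
    intro u hu
    have hmem : ∀ n, A ((u n : H)) ∈ closure ((A : H →ₗ[ℂ] H) '' Metric.closedBall 0 1) := by
      intro n
      refine subset_closure ⟨(u n : H), ?_, rfl⟩
      have := hu n
      rw [Metric.mem_closedBall, dist_zero_right] at this ⊢
      exact this
    obtain ⟨a, -, φ, hφ, hconv⟩ := hK.tendsto_subseq hmem
    -- the rescaled restriction of A to E is an isometry
    set g : ↥E → H := fun y => ((‖A‖ : ℂ))⁻¹ • A ((y : H)) with hgdef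
    have hgiso : Isometry g := by
      refine Isometry.of_dist_eq (fun y z => ?_)
      rw [dist_eq_norm, dist_eq_norm]
      have hsub : (y : H) - (z : H) ∈ E := E.sub_mem y.2 z.2
      have h1 : g y - g z = ((‖A‖ : ℂ))⁻¹ • A ((y : H) - (z : H)) := by
        rw [hgdef]
        simp only [map_sub, smul_sub]
      rw [h1, norm_smul, hEnorm _ hsub]
      have h2 : ‖((‖A‖ : ℂ))⁻¹‖ = ‖A‖⁻¹ := by
        rw [norm_inv, Complex.norm_real, Real.norm_eq_abs, abs_of_nonneg (norm_nonneg _)]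
      rw [h2]
      have h3 : ‖y - z‖ = ‖(y : H) - (z : H)‖ := rfl
      rw [h3]
      field_simp
    have hgu : CauchySeq (g ∘ (u ∘ φ)) := by
      have h1 : Tendsto (fun n => ((‖A‖ : ℂ))⁻¹ • A ((u (φ n) : H))) atTop
          (𝓝 (((‖A‖ : ℂ))⁻¹ • a)) := hconv.const_smul _
      exact h1.cauchySeq
    have hcs : CauchySeq (u ∘ φ) := by
      have h2 : Cauchy (Filter.map g (Filter.map (u ∘ φ) atTop)) := by
        rw [Filter.map_map]; exact hgu
      exact hgiso.isUniformInducing.cauchy_map_iff.mp h2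
    obtain ⟨b, hb⟩ := cauchySeq_tendsto_of_complete hcs
    refine ⟨b, ?_, φ, hφ, hb⟩
    exact Metric.isClosed_closedBall.mem_of_tendsto hb
      (Eventually.of_forall (fun n => hu (φ n)))
  -- E is nontrivial
  haveI hEnt : Nontrivial ↥E := by
    refine nontrivial_of_ne ⟨x₀, hx₀E⟩ 0 ?_
    intro h
    have : x₀ = 0 := congrArg Subtype.val h
    rw [this, norm_zero] at hx₀1
    norm_num at hx₀1
  -- A restricted to E has an eigenvalue
  have hinv' : ∀ y ∈ E, (A : H →ₗ[ℂ] H) y ∈ E := hinv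
  set f : ↥E →ₗ[ℂ] ↥E := LinearMap.restrict (A : H →ₗ[ℂ] H) hinv' with hfdef
  obtain ⟨μ, hμ⟩ := Module.End.exists_eigenvalue f
  obtain ⟨v, hv⟩ := hμ.exists_hasEigenvector
  have hv0 : (v : H) ≠ 0 := by
    intro h
    exact hv.right (Subtype.ext h)
  have hfv : A (v : H) = μ • (v : H) := by
    have h1 : f v = μ • v := hv.apply_eq_smul
    have h2 : ((f v : ↥E) : H) = A (v : H) := by
      rw [hfdef]; rfl
    rw [h1] at h2
    simpa using h2.symm
  have hμabs : ‖μ‖ = ‖A‖ := by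
    have h1 : ‖A (v : H)‖ = ‖A‖ * ‖(v : H)‖ := hEnorm _ v.2
    rw [hfv, norm_smul] at h1
    have hvn : ‖(v : H)‖ ≠ 0 := norm_ne_zero_iff.mpr hv0
    exact mul_right_cancel₀ hvn h1
  -- normalize the eigenvector
  set w : H := ((‖(v : H)‖ : ℂ))⁻¹ • (v : H) with hwdef
  have hvpos : 0 < ‖(v : H)‖ := norm_pos_iff.mpr hv0
  have hw1 : ‖w‖ = 1 := by
    rw [hwdef, norm_smul, norm_inv, Complex.norm_real, Real.norm_eq_abs,
      abs_of_nonneg (norm_nonneg _)]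
    field_simp
  have hAw : A w = μ • w := by
    rw [hwdef, map_smul, hfv, smul_smul, smul_smul, mul_comm]
  -- Cauchy-Schwarz equality for (star s) w and (star t) w
  have hinner : ‖⟪(star s) w, (star t) w⟫_ℂ‖ = ‖t‖ * ‖s‖ := by
    have h1 : ⟪A w, w⟫_ℂ = (starRingEnd ℂ) μ := by
      rw [hAw, inner_smul_left, inner_self_eq_norm_sq_to_K, hw1]
      norm_num
    have h2 : ⟪A w, w⟫_ℂ = ⟪(star s) w, (star t) w⟫_ℂ := by
      have h3 : A w = t ((star s) w) := by rw [hAdef, ContinuousLinearMap.mul_apply]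
      rw [h3, ContinuousLinearMap.star_eq_adjoint (A := t)]
      exact (ContinuousLinearMap.adjoint_inner_right t _ _).symm
    rw [← h2, h1, RCLike.norm_conj, hμabs, hns]
  have hsw_le : ‖(star s) w‖ ≤ ‖s‖ := by
    calc ‖(star s) w‖ ≤ ‖star s‖ * ‖w‖ := (star s).le_opNorm _
    _ = ‖s‖ := by rw [norm_star, hw1, mul_one]
  have htw_le : ‖(star t) w‖ ≤ ‖t‖ := by
    calc ‖(star t) w‖ ≤ ‖star t‖ * ‖w‖ := (star t).le_opNorm _
    _ = ‖t‖ := by rw [norm_star, hw1, mul_one]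
  have hcs := norm_inner_le_norm (𝕜 := ℂ) ((star s) w) ((star t) w)
  rw [hinner] at hcs
  have hsw : ‖(star s) w‖ = ‖s‖ := by
    nlinarith [norm_nonneg ((star s) w), norm_nonneg ((star t) w)]
  have htw : ‖(star t) w‖ = ‖t‖ := by
    nlinarith [norm_nonneg ((star s) w), norm_nonneg ((star t) w)]
  have hsw0 : (star s) w ≠ 0 := by
    intro h; rw [h, norm_zero] at hsw; exact hspos.ne hsw
  have htw0 : (star t) w ≠ 0 := by
    intro h; rw [h, norm_zero] at htw; exact htpos.ne htw
  have hinner_eq : ‖⟪(star s) w, (star t) w⟫_ℂ‖ = ‖(star s) w‖ * ‖(star t) w‖ := by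
    rw [hsw, htw, hinner]; ring
  obtain ⟨r, hr0, hrw⟩ := (norm_inner_eq_norm_iff hsw0 htw0).mp hinner_eq
  have hrabs : ‖r‖ = ‖t‖ / ‖s‖ := by
    have h1 : ‖(star t) w‖ = ‖r‖ * ‖(star s) w‖ := by rw [hrw, norm_smul]
    rw [htw, hsw] at h1
    field_simp [h1]
    linarith
  have hrpos : 0 < ‖r‖ := norm_pos_iff.mpr hr0
  set lam : ℂ := (starRingEnd ℂ) r / ((‖r‖ : ℝ) : ℂ) with hlamdef
  have hlam : ‖lam‖ = 1 := by
    rw [hlamdef, norm_div, RCLike.norm_conj, Complex.norm_real, Real.norm_eq_abs,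
      abs_of_nonneg (norm_nonneg _), div_self hrpos.ne']
  refine ⟨lam, hlam, le_antisymm ?_ ?_⟩
  · calc ‖t + lam • s‖ ≤ ‖t‖ + ‖lam • s‖ := norm_add_le _ _
    _ = ‖t‖ + ‖s‖ := by rw [norm_smul, hlam, one_mul]
  · have hclam : (starRingEnd ℂ) lam = r / ((‖r‖ : ℝ) : ℂ) := by
      rw [hlamdef, map_div₀, Complex.conj_conj, Complex.conj_ofReal]
    have hrne : ((‖r‖ : ℝ) : ℂ) ≠ 0 := by
      exact_mod_cast hrpos.ne'
    have hsum : ‖r + (starRingEnd ℂ) lam‖ = ‖r‖ + 1 := by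
      rw [hclam]
      have h1 : r + r / ((‖r‖ : ℝ) : ℂ) = r * ((((1 + ‖r‖⁻¹ : ℝ)) : ℂ)) := by
        push_cast
        field_simp
      rw [h1, norm_mul, Complex.norm_real, Real.norm_eq_abs,
        abs_of_nonneg (by positivity : (0:ℝ) ≤ 1 + ‖r‖⁻¹)]
      have habs : ‖r‖ ≠ 0 := hrpos.ne'
      field_simp
    have happ : (star (t + lam • s)) w = (r + (starRingEnd ℂ) lam) • (star s) w := by
      rw [star_add, star_smul]
      simp only [ContinuousLinearMap.add_apply, ContinuousLinearMap.smul_apply]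
      rw [hrw, add_smul]
      rfl
    calc ‖t‖ + ‖s‖ = (‖r‖ + 1) * ‖s‖ := by
          rw [hrabs]; field_simp
    _ = ‖(star (t + lam • s)) w‖ := by rw [happ, norm_smul, hsum, hsw]
    _ ≤ ‖star (t + lam • s)‖ * ‖w‖ := (star (t + lam • s)).le_opNorm _
    _ = ‖t + lam • s‖ := by rw [hw1, norm_star, mul_one]

end Aux

/-- Let `t, s` be compact operators on a complex Hilbert space `H` such
that `t s*` is normal. Then `t ∥ s` in `K(H)` iff `‖t s*‖ = ‖t‖·‖s‖`. -/
theorem statement16 {H : Type*} [NormedAddCommGroup H] [InnerProductSpace ℂ H]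
    [CompleteSpace H] (t s : H →L[ℂ] H)
    (ht : IsCompactOperator t) (hs : IsCompactOperator s)
    (hn : (t * star s) * star (t * star s) = star (t * star s) * (t * star s)) :
    NormParallel t s ↔ ‖t * star s‖ = ‖t‖ * ‖s‖ := by
  constructor
  · rintro ⟨lam, hlam, heq⟩
    exact aux_fwd ht hs hlam heq
  · intro h
    exact aux_bwd ht hs hn h
end
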